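/- The map Log_𝟙 : M → ℝ³ defined by Log_𝟙(x) = (1/sinc(φ(x))) · [x₁, x₂, x₃]ᵀ, where φ(x) = wrap(arctan2(x₁, x₀)) and sinc(t) = sin(t)/t (with sinc(0)=1), is continuous on M = {x ∈ ℝ⁴ : x₀² + x₁² = 1}. -/

import Mathlib

open Real

/-- Four-quadrant arctangent: `arctan2 y x ∈ (-π, π]` is the argument of `x + y i`. -/
noncomputable def arctan2 (y x : ℝ) : ℝ := Complex.arg (Complex.mk x y)

/-- The angle-wrapping function mapping into `(-π/2, π/2]`. -/
noncomputable def wrap (α : ℝ) : ℝ :=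
  if α ≤ -(π / 2) then α + π
  else if α > π / 2 then α - π
  else α

/-- `_root_.sinc t = sin t / t`, with `_root_.sinc 0 = 1`. -/
noncomputable def sinc (t : ℝ) : ℝ := if t = 0 then 1 else Real.sin t / t

/-- The rotation half-angle of a PUDQ. -/
noncomputable def phi (x : Fin 4 → ℝ) : ℝ := wrap (arctan2 (x 1) (x 0))

/-- The logarithm map at the identity, `Log_𝟙 : M → ℝ³`. -/
noncomputable def Log1 (x : Fin 4 → ℝ) : Fin 3 → ℝ :=
  fun i => (1 / _root_.sinc (phi x)) * ![x 1, x 2, x 3] i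

/-- The PUDQ manifold embedded in `ℝ⁴`. -/
def Mset : Set (Fin 4 → ℝ) := {x | x 0 ^ 2 + x 1 ^ 2 = 1}

lemma sinc_continuous : Continuous _root_.sinc := by
  rw [continuous_iff_continuousAt]
  intro t
  by_cases ht : t = 0
  · subst ht
    have h := (Real.hasDerivAt_sin 0).tendsto_slope_zero
    simp only [Real.sin_zero, Real.cos_zero, sub_zero] at h
    have h2 : Filter.Tendsto _root_.sinc (nhdsWithin 0 {(0:ℝ)}ᶜ) (nhds 1) := by
      refine h.congr' ?_
      filter_upwards [self_mem_nhdsWithin] with t ht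
      simp only [Set.mem_compl_iff, Set.mem_singleton_iff] at ht
      simp [_root_.sinc, ht, zero_add, smul_eq_mul, div_eq_inv_mul]
    have : ContinuousAt _root_.sinc 0 := by
      unfold ContinuousAt
      rw [← nhdsNE_sup_pure (0:ℝ)]
      rw [Filter.tendsto_sup]
      constructor
      · simpa [_root_.sinc] using h2
      · simpa [_root_.sinc] using tendsto_pure_nhds _root_.sinc 0
    exact this
  · have : ContinuousAt (fun t => Real.sin t / t) t :=
      (Real.continuous_sin.continuousAt).div continuousAt_id ht
    refine this.congr ?_
    filter_upwards [isOpen_ne.mem_nhds ht] with s hs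
    simp [_root_.sinc, hs]

lemma sinc_even (t : ℝ) : _root_.sinc (-t) = _root_.sinc t := by
  by_cases ht : t = 0
  · simp [ht]
  · simp [_root_.sinc, ht, neg_eq_zero, Real.sin_neg, neg_div_neg_eq]

lemma sinc_abs (t : ℝ) : _root_.sinc |t| = _root_.sinc t := by
  rcases abs_choice t with h | h
  · rw [h]
  · rw [h, sinc_even]

lemma sinc_pos_of_mem (t : ℝ) (h0 : 0 ≤ t) (h1 : t ≤ π/2) : 0 < _root_.sinc t := by
  rcases eq_or_lt_of_le h0 with h | h
  · simp [_root_.sinc, ← h]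
  · have hs : 0 < Real.sin t := Real.sin_pos_of_pos_of_lt_pi h (lt_of_le_of_lt h1 (by linarith [Real.pi_pos]))
    simp only [_root_.sinc, if_neg (ne_of_gt h)]
    positivity

lemma arcsin_abs_sin (w : ℝ) (h1 : -(π/2) ≤ w) (h2 : w ≤ π/2) :
    Real.arcsin |Real.sin w| = |w| := by
  have habs : |Real.sin w| = Real.sin |w| := by
    rcases le_or_gt 0 w with h | h
    · rw [abs_of_nonneg h, abs_of_nonneg
        (Real.sin_nonneg_of_nonneg_of_le_pi h (by linarith [Real.pi_pos]))]
    · rw [abs_of_neg h, Real.sin_neg]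
      exact abs_of_nonpos (Real.sin_nonpos_of_nonpos_of_neg_pi_le (le_of_lt h) (by linarith [Real.pi_pos]))
  rw [habs, Real.arcsin_sin (by linarith [abs_nonneg w]) (abs_le.mpr ⟨h1, h2⟩)]

lemma key (θ : ℝ) (hθ1 : -π < θ) (hθ2 : θ ≤ π) :
    _root_.sinc (wrap θ) = _root_.sinc (Real.arcsin |Real.sin θ|) := by
  have hπ := Real.pi_pos
  unfold wrap
  split_ifs with h1 h2
  · have hs : |Real.sin (θ + π)| = |Real.sin θ| := by
      rw [Real.sin_add_pi, abs_neg]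
    rw [← hs, arcsin_abs_sin _ (by linarith) (by linarith), sinc_abs]
  · have hs : |Real.sin (θ - π)| = |Real.sin θ| := by
      rw [Real.sin_sub_pi, abs_neg]
    rw [← hs, arcsin_abs_sin _ (by linarith) (by linarith), sinc_abs]
  · rw [arcsin_abs_sin _ (by linarith) (by linarith), sinc_abs]

lemma sinc_phi_eq (x : Fin 4 → ℝ) (hx : x ∈ Mset) :
    _root_.sinc (phi x) = _root_.sinc (Real.arcsin |x 1|) := by
  have hx' : x 0 ^ 2 + x 1 ^ 2 = 1 := hx
  set z : ℂ := Complex.mk (x 0) (x 1) with hz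
  have habs : ‖z‖ = 1 := by
    rw [Complex.norm_def, Complex.normSq_mk]
    rw [show x 0 * x 0 + x 1 * x 1 = 1 by nlinarith]
    exact Real.sqrt_one
  have hsin : Real.sin (Complex.arg z) = x 1 := by
    rw [Complex.sin_arg, habs]
    simp [hz]
  have hk := key (Complex.arg z) (Complex.neg_pi_lt_arg z) (Complex.arg_le_pi z)
  unfold phi arctan2
  rw [← hz, hk, hsin]

theorem Log1_continuousOn : ContinuousOn Log1 Mset := by
  have hcont : Continuous (fun x : Fin 4 → ℝ => 1 / _root_.sinc (Real.arcsin |x 1|)) := by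
    apply continuous_const.div
    · exact sinc_continuous.comp (Real.continuous_arcsin.comp
        (continuous_abs.comp (continuous_apply 1)))
    · intro x
      exact ne_of_gt (sinc_pos_of_mem _ (Real.arcsin_nonneg.mpr (abs_nonneg _))
        (Real.arcsin_le_pi_div_two _))
  refine ContinuousOn.congr
    (g := Log1)
    (f := fun x => fun i => (1 / _root_.sinc (Real.arcsin |x 1|)) * ![x 1, x 2, x 3] i)
    (Continuous.continuousOn ?_) (fun x hx => ?_)
  · apply continuous_pi
    intro i
    apply hcont.mul
    fin_cases i <;> simp <;> exact continuous_apply _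
  · funext i
    unfold Log1
    rw [sinc_phi_eq x hx]
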